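/- Let n ∈ ℕ and let C ⊆ ℝⁿ be a set with ‖u − v‖₂ ≤ K for all u, v ∈ C (diameter bound K ≥ 0). Let F : ℝⁿ → ℝ be differentiable with gradient ∇F that is L-Lipschitz on C. Let (Ω, 𝓕, P) be a probability space and 𝒢 ⊆ 𝓕 a sub-σ-algebra. Let x_prev, x, d_prev : Ω → ℝⁿ be 𝒢-measurable with x_prev(ω), x(ω) ∈ C, and suppose ‖x − x_prev‖₂ ≤ γ·K almost surely for some γ ≥ 0. Let g : Ω → ℝⁿ be an integrable random vector with E[g | 𝒢] = ∇F(x) almost surely and E[‖g − ∇F(x)‖₂² | 𝒢] ≤ σ² almost surely. Let ρ ∈ (0, 1] and define d = (1 − ρ)·d_prev + ρ·g. Then almost surely E[‖∇F(x) − d‖₂² | 𝒢] ≤ (1 − ρ/2)·‖∇F(x_prev) − d_prev‖₂² + ρ²·σ² + (2·L²·K²·γ²)/ρ. -/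

import Mathlib

open MeasureTheory

section SFWHelpers

variable {n : ℕ} {Ω : Type*} {m m0 : MeasurableSpace Ω}

lemma sfw_coord_abs_le (x : EuclideanSpace ℝ (Fin n)) (i : Fin n) : |x i| ≤ ‖x‖ := by
  rw [EuclideanSpace.norm_eq, ← Real.sqrt_sq_eq_abs]
  apply Real.sqrt_le_sqrt
  have h := Finset.single_le_sum (f := fun j => ‖x j‖ ^ 2) (fun j _ => by positivity)
    (Finset.mem_univ i)
  simpa [Real.norm_eq_abs, sq_abs] using h

/-- Conditional expectation of each coordinate of a conditionally centered random vector
vanishes. -/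
lemma sfw_condExp_coord_zero (hm : m ≤ m0) (ℙ : Measure Ω) [IsProbabilityMeasure ℙ]
    {b : Ω → EuclideanSpace ℝ (Fin n)} (hb : Integrable b ℙ) (h0 : ℙ[b|m] =ᵐ[ℙ] 0)
    (i : Fin n) : ℙ[fun ω => b ω i|m] =ᵐ[ℙ] 0 := by
  haveI : SigmaFinite (ℙ.trim hm) := inferInstance
  have hbi : Integrable (fun ω => b ω i) ℙ := (EuclideanSpace.proj (𝕜 := ℝ) i).integrable_comp hb
  refine (ae_eq_condExp_of_forall_setIntegral_eq hm (g := (0 : Ω → ℝ)) hbi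
    (fun s _ _ => (integrable_zero _ _ _).integrableOn) (fun s hs _ => ?_) ?_).symm
  · have h1 : ∫ ω in s, b ω ∂ℙ = 0 := by
      rw [← setIntegral_condExp hm hb hs]
      calc ∫ ω in s, (ℙ[b|m]) ω ∂ℙ
          = ∫ ω in s, (0 : EuclideanSpace ℝ (Fin n)) ∂ℙ :=
            integral_congr_ae (ae_restrict_of_ae h0)
        _ = 0 := integral_zero _ _
    have h2 : ∫ ω in s, b ω i ∂ℙ = (EuclideanSpace.proj (𝕜 := ℝ) i) (∫ ω in s, b ω ∂ℙ) :=
      ContinuousLinearMap.integral_comp_comm (EuclideanSpace.proj (𝕜 := ℝ) i) hb.integrableOn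
    rw [h2, h1, map_zero]
    simp
  · exact StronglyMeasurable.aestronglyMeasurable
      (@stronglyMeasurable_const _ _ m _ (0 : ℝ))

/-- Key truncated conditional Cauchy–Schwarz estimate: on the set where `‖a‖ ≤ N`,
`‖a‖²` is controlled by the conditional expectation of `‖s•a - t•b‖²`. -/
lemma sfw_indicator_bound (hm : m ≤ m0) (ℙ : Measure Ω) [IsProbabilityMeasure ℙ]
    {a b : Ω → EuclideanSpace ℝ (Fin n)} {s t : ℝ} (hs : 0 < s)
    (ha_meas : StronglyMeasurable[m] a) (ha_int : Integrable a ℙ)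
    (hb_int : Integrable b ℙ) (hb0 : ℙ[b|m] =ᵐ[ℙ] 0)
    (he1 : Integrable (fun ω => s • a ω - t • b ω) ℙ)
    (he2 : Integrable (fun ω => ‖s • a ω - t • b ω‖ ^ 2) ℙ) (N : ℕ) :
    ∀ᵐ ω ∂ℙ, ‖a ω‖ ≤ (N : ℝ) →
      ‖a ω‖ ^ 2 ≤ s⁻¹ * s⁻¹ * (ℙ[fun ω' => ‖s • a ω' - t • b ω'‖ ^ 2|m]) ω := by
  haveI : SigmaFinite (ℙ.trim hm) := inferInstance
  set A : Set Ω := (fun ω' => ‖a ω'‖) ⁻¹' Set.Iic (N : ℝ) with hA_def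
  have hA : MeasurableSet[m] A := ha_meas.norm.measurable measurableSet_Iic
  have hA_mem : ∀ ω, ω ∈ A ↔ ‖a ω‖ ≤ (N : ℝ) := fun ω => Iff.rfl
  set ind : Ω → ℝ := A.indicator (fun _ => (1:ℝ)) with hind_def
  have hind_meas : StronglyMeasurable[m] ind := stronglyMeasurable_const.indicator hA
  have hind_mem : ∀ ω, ω ∈ A → ind ω = 1 := fun ω hω => Set.indicator_of_mem hω _
  have hind_nmem : ∀ ω, ω ∉ A → ind ω = 0 := fun ω hω => Set.indicator_of_notMem hω _
  have hai_meas : ∀ i : Fin n, StronglyMeasurable[m] (fun ω => a ω i) := fun i =>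
    (((EuclideanSpace.proj (𝕜 := ℝ) i).continuous.measurable).comp
      ha_meas.measurable).stronglyMeasurable
  have hfm : ∀ i : Fin n, StronglyMeasurable[m] (fun ω => ind ω * a ω i) := fun i =>
    hind_meas.mul (hai_meas i)
  have hfb : ∀ i : Fin n, ∀ᵐ ω ∂ℙ, ‖ind ω * a ω i‖ ≤ (N : ℝ) := by
    intro i
    refine ae_of_all _ fun ω => ?_
    by_cases hω : ω ∈ A
    · rw [hind_mem ω hω, one_mul, Real.norm_eq_abs]
      exact le_trans (sfw_coord_abs_le (a ω) i) ((hA_mem ω).mp hω)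
    · rw [hind_nmem ω hω, zero_mul, norm_zero]
      positivity
  have hgi_int : ∀ i : Fin n, Integrable (fun ω => (s • a ω - t • b ω) i) ℙ := fun i =>
    (EuclideanSpace.proj (𝕜 := ℝ) i).integrable_comp he1
  -- conditional expectation of the coordinates of s•a - t•b
  have hg_ce : ∀ i : Fin n,
      ℙ[fun ω => (s • a ω - t • b ω) i|m] =ᵐ[ℙ] fun ω => s * a ω i := by
    intro i
    have hsplit : (fun ω => (s • a ω - t • b ω) i)
        = (s • fun ω => a ω i) - (t • fun ω => b ω i) := rfl
    rw [hsplit]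
    have hsa : Integrable (s • fun ω => a ω i) ℙ :=
      ((EuclideanSpace.proj (𝕜 := ℝ) i).integrable_comp ha_int).smul s
    have hsb : Integrable (t • fun ω => b ω i) ℙ :=
      ((EuclideanSpace.proj (𝕜 := ℝ) i).integrable_comp hb_int).smul t
    refine (condExp_sub hsa hsb m).trans ?_
    have hcea : ℙ[(fun ω => a ω i)|m] = fun ω => a ω i :=
      condExp_of_stronglyMeasurable hm (hai_meas i)
        ((EuclideanSpace.proj (𝕜 := ℝ) i).integrable_comp ha_int)
    have hceb := sfw_condExp_coord_zero hm ℙ hb_int hb0 i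
    filter_upwards [condExp_smul (μ := ℙ) (m := m) s (fun ω => a ω i),
      condExp_smul (μ := ℙ) (m := m) t (fun ω => b ω i), hceb] with ω e1 e2 e3
    simp only [Pi.sub_apply, e1, e2, Pi.smul_apply, hcea, smul_eq_mul]
    rw [e3]
    simp
  -- pull-out for each coordinate
  have hcoord : ∀ i : Fin n,
      ℙ[(fun ω => ind ω * a ω i) * fun ω => (s • a ω - t • b ω) i|m]
        =ᵐ[ℙ] fun ω => (ind ω * a ω i) * (s * a ω i) := by
    intro i
    have h1 := condExp_stronglyMeasurable_mul_of_bound hm (hfm i) (hgi_int i) N (hfb i)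
    refine h1.trans ?_
    filter_upwards [hg_ce i] with ω e2
    simp only [Pi.mul_apply, e2]
  have hFint : ∀ i ∈ Finset.univ, Integrable
      ((fun ω => ind ω * a ω i) * fun ω => (s • a ω - t • b ω) i) ℙ := fun i _ =>
    (hgi_int i).bdd_mul ((hfm i).mono hm).aestronglyMeasurable (hfb i)
  have hsum := condExp_finsetSum (μ := ℙ) (m := m) hFint
  have hLfun : (∑ i : Fin n, ((fun ω => ind ω * a ω i) * fun ω => (s • a ω - t • b ω) i))
      = fun ω => ind ω * (inner ℝ (a ω) (s • a ω - t • b ω) : ℝ) := by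
    funext ω
    simp only [Finset.sum_apply, Pi.mul_apply, PiLp.inner_apply, RCLike.inner_apply,
      conj_trivial, Finset.mul_sum]
    exact Finset.sum_congr rfl fun i _ => by ring
  have hnorm : ∀ ω, ∑ i : Fin n, a ω i * a ω i = ‖a ω‖ ^ 2 := by
    intro ω
    have h := real_inner_self_eq_norm_sq (a ω)
    simp only [PiLp.inner_apply, RCLike.inner_apply, conj_trivial] at h
    exact h
  have hMain : ℙ[fun ω => ind ω * (inner ℝ (a ω) (s • a ω - t • b ω) : ℝ)|m]
      =ᵐ[ℙ] fun ω => ind ω * (s * ‖a ω‖ ^ 2) := by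
    rw [← hLfun]
    refine hsum.trans ?_
    have hall : ∀ᵐ ω ∂ℙ, ∀ i : Fin n,
        (ℙ[(fun ω => ind ω * a ω i) * fun ω => (s • a ω - t • b ω) i|m]) ω
          = (ind ω * a ω i) * (s * a ω i) := ae_all_iff.mpr fun i => hcoord i
    filter_upwards [hall] with ω hω
    rw [Finset.sum_apply]
    calc ∑ i : Fin n, (ℙ[(fun ω => ind ω * a ω i) * fun ω => (s • a ω - t • b ω) i|m]) ω
        = ∑ i : Fin n, (ind ω * a ω i) * (s * a ω i) := Finset.sum_congr rfl fun i _ => hω i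
      _ = (ind ω * s) * ∑ i : Fin n, a ω i * a ω i := by
          rw [Finset.mul_sum]; exact Finset.sum_congr rfl fun i _ => by ring
      _ = ind ω * (s * ‖a ω‖ ^ 2) := by rw [hnorm ω]; ring
  -- pointwise Young-type bound
  have hind01 : ∀ ω, 0 ≤ ind ω ∧ ind ω ≤ 1 := by
    intro ω
    by_cases hω : ω ∈ A
    · rw [hind_mem ω hω]; exact ⟨zero_le_one, le_refl 1⟩
    · rw [hind_nmem ω hω]; exact ⟨le_refl 0, zero_le_one⟩
  have hptw : (fun ω => ind ω * (inner ℝ (a ω) (s • a ω - t • b ω) : ℝ))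
      ≤ᵐ[ℙ] fun ω => (s / 2) * (ind ω * ‖a ω‖ ^ 2) + (s⁻¹ / 2) * ‖s • a ω - t • b ω‖ ^ 2 := by
    refine ae_of_all _ fun ω => ?_
    dsimp only
    have hsu : s * s⁻¹ = 1 := mul_inv_cancel₀ hs.ne'
    have hsinv : 0 < s⁻¹ := inv_pos.mpr hs
    by_cases hω : ω ∈ A
    · rw [hind_mem ω hω, one_mul, one_mul]
      have h1 := real_inner_le_norm (a ω) (s • a ω - t • b ω)
      nlinarith [mul_nonneg hsinv.le (sq_nonneg (s * ‖a ω‖ - ‖s • a ω - t • b ω‖)),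
        norm_nonneg (a ω), norm_nonneg (s • a ω - t • b ω)]
    · rw [hind_nmem ω hω, zero_mul, zero_mul, mul_zero, zero_add]
      positivity
  have hinner_aesm : AEStronglyMeasurable
      (fun ω => (inner ℝ (a ω) (s • a ω - t • b ω) : ℝ)) ℙ :=
    ((ha_meas.mono hm).aestronglyMeasurable).inner he1.1
  have hint1 : Integrable (fun ω => ind ω * (inner ℝ (a ω) (s • a ω - t • b ω) : ℝ)) ℙ := by
    refine Integrable.mono' (he1.norm.const_mul (N : ℝ))
      (((hind_meas.mono hm).aestronglyMeasurable).mul hinner_aesm) (ae_of_all _ fun ω => ?_)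
    rw [Real.norm_eq_abs, abs_mul]
    by_cases hω : ω ∈ A
    · rw [hind_mem ω hω, abs_one, one_mul]
      calc |(inner ℝ (a ω) (s • a ω - t • b ω) : ℝ)| ≤ ‖a ω‖ * ‖s • a ω - t • b ω‖ :=
            abs_real_inner_le_norm _ _
        _ ≤ (N : ℝ) * ‖s • a ω - t • b ω‖ :=
            mul_le_mul_of_nonneg_right ((hA_mem ω).mp hω) (norm_nonneg _)
    · rw [hind_nmem ω hω, abs_zero, zero_mul]
      positivity
  have hind_a2_int : Integrable (fun ω => ind ω * ‖a ω‖ ^ 2) ℙ := by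
    refine Integrable.mono' (integrable_const ((N : ℝ) ^ 2))
      (((hind_meas.mono hm).aestronglyMeasurable).mul
        (((ha_meas.mono hm).aestronglyMeasurable).norm.pow 2)) (ae_of_all _ fun ω => ?_)
    rw [Real.norm_eq_abs, abs_mul]
    by_cases hω : ω ∈ A
    · rw [hind_mem ω hω, abs_one, one_mul, abs_of_nonneg (by positivity)]
      have h1 : ‖a ω‖ ≤ (N : ℝ) := (hA_mem ω).mp hω
      have h2 := norm_nonneg (a ω)
      nlinarith
    · rw [hind_nmem ω hω, abs_zero, zero_mul]
      positivity
  have hint2 : Integrable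
      (fun ω => (s / 2) * (ind ω * ‖a ω‖ ^ 2) + (s⁻¹ / 2) * ‖s • a ω - t • b ω‖ ^ 2) ℙ :=
    (hind_a2_int.const_mul _).add (he2.const_mul _)
  have hmono := condExp_mono (m := m) hint1 hint2 hptw
  -- conditional expectation of the right-hand side
  have hind_a2_meas : StronglyMeasurable[m] (fun ω => ind ω * ‖a ω‖ ^ 2) := by
    have h := hind_meas.mul (ha_meas.norm.mul ha_meas.norm)
    have heq : (fun ω => ind ω * ‖a ω‖ ^ 2) = fun ω => ind ω * (‖a ω‖ * ‖a ω‖) := by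
      funext ω; ring
    rw [heq]; exact h
  have hce_rhs : ℙ[fun ω => (s / 2) * (ind ω * ‖a ω‖ ^ 2)
        + (s⁻¹ / 2) * ‖s • a ω - t • b ω‖ ^ 2|m]
      =ᵐ[ℙ] fun ω => (s / 2) * (ind ω * ‖a ω‖ ^ 2)
        + (s⁻¹ / 2) * (ℙ[fun ω' => ‖s • a ω' - t • b ω'‖ ^ 2|m]) ω := by
    have hsplit : (fun ω => (s / 2) * (ind ω * ‖a ω‖ ^ 2)
          + (s⁻¹ / 2) * ‖s • a ω - t • b ω‖ ^ 2)
        = ((s / 2) • fun ω => ind ω * ‖a ω‖ ^ 2)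
          + ((s⁻¹ / 2) • fun ω => ‖s • a ω - t • b ω‖ ^ 2) := rfl
    rw [hsplit]
    have h1 : Integrable ((s / 2) • fun ω => ind ω * ‖a ω‖ ^ 2) ℙ := hind_a2_int.smul _
    have h2 : Integrable ((s⁻¹ / 2) • fun ω => ‖s • a ω - t • b ω‖ ^ 2) ℙ := he2.smul _
    refine (condExp_add h1 h2 m).trans ?_
    have hcea : ℙ[(fun ω => ind ω * ‖a ω‖ ^ 2)|m] = fun ω => ind ω * ‖a ω‖ ^ 2 :=
      condExp_of_stronglyMeasurable hm hind_a2_meas hind_a2_int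
    filter_upwards [condExp_smul (μ := ℙ) (m := m) (s / 2) (fun ω => ind ω * ‖a ω‖ ^ 2),
      condExp_smul (μ := ℙ) (m := m) (s⁻¹ / 2) (fun ω => ‖s • a ω - t • b ω‖ ^ 2)]
      with ω e1 e2
    simp only [Pi.add_apply, e1, e2, Pi.smul_apply, hcea, smul_eq_mul]
  -- combine
  filter_upwards [hMain, hmono, hce_rhs] with ω e1 e2 e3 hωN
  have hωA : ω ∈ A := (hA_mem ω).mpr hωN
  rw [e1] at e2
  rw [e3] at e2
  rw [hind_mem ω hωA, one_mul] at e2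
  have hsu : s * s⁻¹ = 1 := mul_inv_cancel₀ hs.ne'
  have hsinv : 0 < s⁻¹ := inv_pos.mpr hs
  nlinarith [mul_le_mul_of_nonneg_left e2 (le_of_lt hsinv)]

/-- Conditional Jensen substitute: if `‖s•a - t•b‖²` is integrable, `a` is `m`-measurable
and `b` is conditionally centered, then `‖a‖²` is integrable. -/
lemma sfw_sq_norm_integrable (hm : m ≤ m0) (ℙ : Measure Ω) [IsProbabilityMeasure ℙ]
    {a b : Ω → EuclideanSpace ℝ (Fin n)} {s t : ℝ} (hs : 0 < s)
    (ha_meas : StronglyMeasurable[m] a)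
    (hb_int : Integrable b ℙ) (hb0 : ℙ[b|m] =ᵐ[ℙ] 0)
    (he2 : Integrable (fun ω => ‖s • a ω - t • b ω‖ ^ 2) ℙ) :
    Integrable (fun ω => ‖a ω‖ ^ 2) ℙ := by
  have ha_aesm : AEStronglyMeasurable a ℙ := (ha_meas.mono hm).aestronglyMeasurable
  have he_aesm : AEStronglyMeasurable (fun ω => s • a ω - t • b ω) ℙ :=
    (ha_aesm.const_smul s).sub (hb_int.1.const_smul t)
  have he1 : Integrable (fun ω => s • a ω - t • b ω) ℙ := by
    refine Integrable.mono' ((integrable_const (1:ℝ)).add he2) he_aesm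
      (ae_of_all _ fun ω => ?_)
    simp only [Pi.add_apply]
    nlinarith [sq_nonneg (‖s • a ω - t • b ω‖ - 1), norm_nonneg (s • a ω - t • b ω)]
  have ha_int : Integrable a ℙ := by
    have hrw : a = s⁻¹ • ((fun ω => s • a ω - t • b ω) + t • b) := by
      funext ω
      simp only [Pi.smul_apply, Pi.add_apply, Pi.sub_apply]
      rw [sub_add_cancel, smul_smul, inv_mul_cancel₀ hs.ne', one_smul]
    rw [hrw]
    exact (he1.add (hb_int.smul t)).smul s⁻¹
  have hkey : ∀ᵐ ω ∂ℙ, ∀ N : ℕ, ‖a ω‖ ≤ (N : ℝ) →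
      ‖a ω‖ ^ 2 ≤ s⁻¹ * s⁻¹ * (ℙ[fun ω' => ‖s • a ω' - t • b ω'‖ ^ 2|m]) ω :=
    ae_all_iff.mpr fun N =>
      sfw_indicator_bound hm ℙ hs ha_meas ha_int hb_int hb0 he1 he2 N
  refine Integrable.mono'
    ((integrable_condExp (m := m) (f := fun ω' => ‖s • a ω' - t • b ω'‖ ^ 2)).const_mul (s⁻¹ * s⁻¹))
    (ha_aesm.norm.pow 2) ?_
  filter_upwards [hkey] with ω hω
  obtain ⟨N, hN⟩ := exists_nat_ge ‖a ω‖
  have := hω N hN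
  rwa [Real.norm_eq_abs, abs_of_nonneg (by positivity)]

/-- Main conditional second-moment identity. -/
lemma sfw_condExp_sq_norm (hm : m ≤ m0) (ℙ : Measure Ω) [IsProbabilityMeasure ℙ]
    {a b : Ω → EuclideanSpace ℝ (Fin n)} (s t : ℝ)
    (ha_meas : StronglyMeasurable[m] a)
    (hb_int : Integrable b ℙ) (hb0 : ℙ[b|m] =ᵐ[ℙ] 0)
    (ha2 : Integrable (fun ω => ‖a ω‖ ^ 2) ℙ)
    (hb2 : Integrable (fun ω => ‖b ω‖ ^ 2) ℙ) :
    ℙ[fun ω => ‖s • a ω - t • b ω‖ ^ 2|m] =ᵐ[ℙ]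
      fun ω => s ^ 2 * ‖a ω‖ ^ 2 + t ^ 2 * (ℙ[fun ω' => ‖b ω'‖ ^ 2|m]) ω := by
  haveI : SigmaFinite (ℙ.trim hm) := inferInstance
  have ha_aesm : AEStronglyMeasurable a ℙ := (ha_meas.mono hm).aestronglyMeasurable
  have hin_aesm : AEStronglyMeasurable (fun ω => (inner ℝ (a ω) (b ω) : ℝ)) ℙ :=
    ha_aesm.inner hb_int.1
  have hin_int : Integrable (fun ω => (inner ℝ (a ω) (b ω) : ℝ)) ℙ := by
    refine Integrable.mono' (ha2.add hb2) hin_aesm (ae_of_all _ fun ω => ?_)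
    have h1 := abs_real_inner_le_norm (a ω) (b ω)
    rw [Real.norm_eq_abs]
    simp only [Pi.add_apply]
    nlinarith [sq_nonneg (‖a ω‖ - ‖b ω‖), norm_nonneg (a ω), norm_nonneg (b ω)]
  have hab_i : ∀ i : Fin n, Integrable (fun ω => a ω i * b ω i) ℙ := by
    intro i
    have hmeas : AEStronglyMeasurable (fun ω => a ω i * b ω i) ℙ :=
      ((EuclideanSpace.proj (𝕜 := ℝ) i).continuous.comp_aestronglyMeasurable ha_aesm).mul
        ((EuclideanSpace.proj (𝕜 := ℝ) i).continuous.comp_aestronglyMeasurable hb_int.1)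
    refine Integrable.mono' (ha2.add hb2) hmeas (ae_of_all _ fun ω => ?_)
    have h1 := sfw_coord_abs_le (a ω) i
    have h2 := sfw_coord_abs_le (b ω) i
    rw [Real.norm_eq_abs, abs_mul]
    simp only [Pi.add_apply]
    nlinarith [mul_le_mul h1 h2 (abs_nonneg (b ω i)) (norm_nonneg (a ω)),
      sq_nonneg (‖a ω‖ - ‖b ω‖), norm_nonneg (a ω), norm_nonneg (b ω)]
  -- conditional expectation of the inner product vanishes
  have hinner0 : ℙ[fun ω => (inner ℝ (a ω) (b ω) : ℝ)|m] =ᵐ[ℙ] 0 := by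
    have hrw : (fun ω => (inner ℝ (a ω) (b ω) : ℝ))
        = ∑ i : Fin n, ((fun ω => a ω i) * fun ω => b ω i) := by
      funext ω
      simp [PiLp.inner_apply, RCLike.inner_apply, Finset.sum_apply, mul_comm]
    rw [hrw]
    have h1 := condExp_finsetSum (μ := ℙ) (m := m) (s := Finset.univ)
      (f := fun i : Fin n => (fun ω => a ω i) * fun ω => b ω i) (fun i _ => hab_i i)
    refine h1.trans ?_
    have h2 : ∀ i : Fin n, ℙ[(fun ω => a ω i) * fun ω => b ω i|m] =ᵐ[ℙ] 0 := by
      intro i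
      have hai : StronglyMeasurable[m] (fun ω => a ω i) :=
        (((EuclideanSpace.proj (𝕜 := ℝ) i).continuous.measurable).comp
          ha_meas.measurable).stronglyMeasurable
      have hbi : Integrable (fun ω => b ω i) ℙ :=
        (EuclideanSpace.proj (𝕜 := ℝ) i).integrable_comp hb_int
      have h3 := condExp_mul_of_stronglyMeasurable_left hai (hab_i i) hbi
      refine h3.trans ?_
      filter_upwards [sfw_condExp_coord_zero hm ℙ hb_int hb0 i] with ω hω
      simp only [Pi.mul_apply, hω, Pi.zero_apply, mul_zero]
    have hall : ∀ᵐ ω ∂ℙ, ∀ i : Fin n, (ℙ[(fun ω => a ω i) * fun ω => b ω i|m]) ω = 0 :=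
      ae_all_iff.mpr fun i => h2 i
    filter_upwards [hall] with ω hω
    simp only [Finset.sum_apply, Pi.zero_apply]
    exact Finset.sum_eq_zero fun i _ => hω i
  -- expansion of the squared norm
  have hfun : (fun ω => ‖s • a ω - t • b ω‖ ^ 2)
      = ((fun ω => s ^ 2 * ‖a ω‖ ^ 2)
          + ((-(2 * s * t)) • fun ω => (inner ℝ (a ω) (b ω) : ℝ)))
        + (t ^ 2 • fun ω => ‖b ω‖ ^ 2) := by
    funext ω
    simp only [Pi.add_apply, Pi.smul_apply, smul_eq_mul]
    rw [norm_sub_sq_real, norm_smul, norm_smul, real_inner_smul_left, real_inner_smul_right,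
      mul_pow, mul_pow, Real.norm_eq_abs, Real.norm_eq_abs, sq_abs, sq_abs]
    ring
  rw [hfun]
  have hf1_int : Integrable (fun ω => s ^ 2 * ‖a ω‖ ^ 2) ℙ := ha2.const_mul _
  have hf2_int : Integrable ((-(2 * s * t)) • fun ω => (inner ℝ (a ω) (b ω) : ℝ)) ℙ :=
    hin_int.smul _
  have hf3_int : Integrable ((t ^ 2) • fun ω => ‖b ω‖ ^ 2) ℙ := hb2.smul _
  have hf1_meas : StronglyMeasurable[m] (fun ω => s ^ 2 * ‖a ω‖ ^ 2) := by
    have h := (ha_meas.norm.mul ha_meas.norm).const_mul (s ^ 2)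
    have heq : (fun ω => s ^ 2 * ‖a ω‖ ^ 2) = fun ω => s ^ 2 * (‖a ω‖ * ‖a ω‖) := by
      funext ω; ring
    rw [heq]; exact h
  have hce1 : ℙ[(fun ω => s ^ 2 * ‖a ω‖ ^ 2)|m] = fun ω => s ^ 2 * ‖a ω‖ ^ 2 :=
    condExp_of_stronglyMeasurable hm hf1_meas hf1_int
  filter_upwards [condExp_add (μ := ℙ) (m := m) (hf1_int.add hf2_int) hf3_int,
    condExp_add (μ := ℙ) (m := m) hf1_int hf2_int,
    condExp_smul (μ := ℙ) (m := m) (-(2 * s * t)) (fun ω => (inner ℝ (a ω) (b ω) : ℝ)),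
    condExp_smul (μ := ℙ) (m := m) (t ^ 2) (fun ω => ‖b ω‖ ^ 2), hinner0] with ω e1 e2 e3 e4 e5
  rw [e1]
  simp only [Pi.add_apply, e2, e3, e4, Pi.smul_apply, hce1, smul_eq_mul]
  rw [e5]
  simp

lemma sfw_arith {ρ A A' D V σ2 L K γ : ℝ} (hρ0 : 0 < ρ) (hρlt : ρ < 1)
    (hA0 : 0 ≤ A) (hA'0 : 0 ≤ A') (hD0 : 0 ≤ D) (hA : A ≤ A' + D)
    (hD2 : D ^ 2 ≤ L ^ 2 * K ^ 2 * γ ^ 2) (hV : V ≤ σ2) :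
    (1 - ρ) ^ 2 * A ^ 2 + ρ ^ 2 * V
      ≤ (1 - ρ / 2) * A' ^ 2 + ρ ^ 2 * σ2 + 2 * L ^ 2 * K ^ 2 * γ ^ 2 / ρ := by
  have hs : (0:ℝ) < 1 - ρ := by linarith
  have hkey : ((1 - ρ) ^ 2 * A ^ 2 - (1 - ρ / 2) * A' ^ 2) * ρ
      ≤ 2 * (L ^ 2 * K ^ 2 * γ ^ 2) := by
    have h1 : A ^ 2 ≤ (A' + D) ^ 2 := by nlinarith
    have h2 : ρ * (1 - ρ) ^ 2 * A ^ 2 ≤ ρ * (1 - ρ) * (A' + D) ^ 2 := by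
      nlinarith [mul_le_mul_of_nonneg_left h1 (by positivity : (0:ℝ) ≤ ρ * (1 - ρ) ^ 2),
        mul_nonneg (mul_nonneg hρ0.le (mul_nonneg hρ0.le hs.le)) (sq_nonneg (A' + D))]
    have h3 : (1 - ρ) * (2 * ρ * A' * D) ≤ (1 - ρ) * (ρ ^ 2 / 2 * A' ^ 2 + 2 * D ^ 2) :=
      mul_le_mul_of_nonneg_left (by nlinarith [sq_nonneg (ρ * A' - 2 * D)]) hs.le
    have h4 : ρ * (1 - ρ) * (A' + D) ^ 2
        = ρ * (1 - ρ) * A' ^ 2 + (1 - ρ) * (2 * ρ * A' * D) + ρ * (1 - ρ) * D ^ 2 := by ring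
    have h5 : (0:ℝ) ≤ ρ ^ 3 * A' ^ 2 / 2 := by positivity
    have h6 : (0:ℝ) ≤ ρ * (1 + ρ) * D ^ 2 := by positivity
    nlinarith [h2, h3, h4, h5, h6, hD2]
  have hdiv : (1 - ρ) ^ 2 * A ^ 2 - (1 - ρ / 2) * A' ^ 2
      ≤ 2 * (L ^ 2 * K ^ 2 * γ ^ 2) / ρ := by
    rw [le_div_iff₀ hρ0]
    exact hkey
  have hV2 : ρ ^ 2 * V ≤ ρ ^ 2 * σ2 := mul_le_mul_of_nonneg_left hV (sq_nonneg ρ)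
  have heq : 2 * (L ^ 2 * K ^ 2 * γ ^ 2) / ρ = 2 * L ^ 2 * K ^ 2 * γ ^ 2 / ρ := by ring_nf
  linarith [heq ▸ hdiv]

end SFWHelpers

/-- One-step gradient-tracking error recursion for the stochastic Frank–Wolfe algorithm:
if `C` has diameter at most `K`, `∇F` is `L`-Lipschitz on `C`, consecutive iterates
`x_prev, x ∈ C` satisfy `‖x − x_prev‖ ≤ γK` a.s., `g` is an unbiased stochastic gradient
at `x` with conditional variance at most `σ²`, and `d = (1−ρ) d_prev + ρ g`, then a.s.
`E[‖∇F(x) − d‖² | 𝒢] ≤ (1 − ρ/2)‖∇F(x_prev) − d_prev‖² + ρ²σ² + 2L²K²γ²/ρ`. -/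
theorem sfw_gradient_tracking_recursion {n : ℕ}
    (C : Set (EuclideanSpace ℝ (Fin n))) (K : ℝ) (hK : 0 ≤ K)
    (hCdiam : ∀ u ∈ C, ∀ v ∈ C, ‖u - v‖ ≤ K)
    (F : EuclideanSpace ℝ (Fin n) → ℝ) (hF : Differentiable ℝ F)
    (L : ℝ)
    (hLip : ∀ u ∈ C, ∀ v ∈ C, ‖gradient F u - gradient F v‖ ≤ L * ‖u - v‖)
    {Ω : Type*} {m m0 : MeasurableSpace Ω} (hm : m ≤ m0)
    (ℙ : Measure Ω) [IsProbabilityMeasure ℙ]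
    (x_prev x d_prev : Ω → EuclideanSpace ℝ (Fin n))
    (hxprev_meas : Measurable[m] x_prev) (hx_meas : Measurable[m] x)
    (hdprev_meas : Measurable[m] d_prev)
    (hxprevC : ∀ ω, x_prev ω ∈ C) (hxC : ∀ ω, x ω ∈ C)
    (γ : ℝ) (hγ : 0 ≤ γ)
    (hstep : ∀ᵐ ω ∂ℙ, ‖x ω - x_prev ω‖ ≤ γ * K)
    (g : Ω → EuclideanSpace ℝ (Fin n)) (hg_int : Integrable g ℙ)
    (hg_unbiased : ℙ[g|m] =ᵐ[ℙ] fun ω => gradient F (x ω))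
    (σ : ℝ)
    (hg_var : ∀ᵐ ω ∂ℙ,
      (ℙ[fun ω' => ‖g ω' - gradient F (x ω')‖ ^ 2|m]) ω ≤ σ ^ 2)
    (ρ : ℝ) (hρ : ρ ∈ Set.Ioc (0 : ℝ) 1)
    (d : Ω → EuclideanSpace ℝ (Fin n))
    (hd : ∀ ω, d ω = (1 - ρ) • d_prev ω + ρ • g ω) :
    ∀ᵐ ω ∂ℙ,
      (ℙ[fun ω' => ‖gradient F (x ω') - d ω'‖ ^ 2|m]) ω ≤
        (1 - ρ / 2) * ‖gradient F (x_prev ω) - d_prev ω‖ ^ 2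
          + ρ ^ 2 * σ ^ 2 + 2 * L ^ 2 * K ^ 2 * γ ^ 2 / ρ := by
  obtain ⟨hρ0, hρ1⟩ := hρ
  haveI : SigmaFinite (ℙ.trim hm) := inferInstance
  -- measurability of the gradient
  have hgrad_meas : Measurable (gradient F) := by
    have h1 : Measurable (fderiv ℝ F) := measurable_fderiv _ _
    exact ((InnerProductSpace.toDual ℝ
      (EuclideanSpace ℝ (Fin n))).symm.continuous.measurable).comp h1
  have hgx : Measurable[m] fun ω => gradient F (x ω) := hgrad_meas.comp hx_meas
  -- nonemptiness and boundedness of the gradient along x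
  have hne : Nonempty Ω := by
    by_contra h
    rw [not_nonempty_iff] at h
    have h1 : (ℙ : Measure Ω) Set.univ = 1 := measure_univ
    rw [Set.univ_eq_empty_iff.mpr h, measure_empty] at h1
    exact zero_ne_one h1
  obtain ⟨ω₀⟩ := hne
  have hCB : ∀ ω, ‖gradient F (x ω)‖ ≤ ‖gradient F (x ω₀)‖ + |L| * K := by
    intro ω
    have h1 := hLip (x ω) (hxC ω) (x ω₀) (hxC ω₀)
    have h2 := hCdiam (x ω) (hxC ω) (x ω₀) (hxC ω₀)
    have h3 := norm_sub_norm_le (gradient F (x ω)) (gradient F (x ω₀))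
    have h4 : L * ‖x ω - x ω₀‖ ≤ |L| * K := by
      nlinarith [le_abs_self L, abs_nonneg L, norm_nonneg (x ω - x ω₀)]
    linarith
  have hgx_int : Integrable (fun ω => gradient F (x ω)) ℙ :=
    Integrable.mono' (integrable_const (‖gradient F (x ω₀)‖ + |L| * K))
      ((hgx.mono hm le_rfl).aestronglyMeasurable) (ae_of_all _ hCB)
  -- the centered noise b = g - ∇F∘x
  have hb_int : Integrable (fun ω => g ω - gradient F (x ω)) ℙ := hg_int.sub hgx_int
  have hb0 : ℙ[(fun ω => g ω - gradient F (x ω))|m] =ᵐ[ℙ] 0 := by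
    have hbeq : (fun ω => g ω - gradient F (x ω)) = g - fun ω => gradient F (x ω) := rfl
    rw [hbeq]
    have h1 := condExp_sub (m := m) hg_int hgx_int
    have h2 : ℙ[(fun ω => gradient F (x ω))|m] = fun ω => gradient F (x ω) :=
      condExp_of_stronglyMeasurable hm hgx.stronglyMeasurable hgx_int
    filter_upwards [h1, hg_unbiased] with ω e1 e2
    rw [e1]
    simp only [Pi.sub_apply, e2, h2, Pi.zero_apply, sub_self]
  have ha_meas : StronglyMeasurable[m] (fun ω => gradient F (x ω) - d_prev ω) :=
    (hgx.sub hdprev_meas).stronglyMeasurable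
  -- pointwise decomposition of the error
  have heq_fun : (fun ω' => ‖gradient F (x ω') - d ω'‖ ^ 2)
      = fun ω' => ‖(1 - ρ) • (gradient F (x ω') - d_prev ω')
          - ρ • (g ω' - gradient F (x ω'))‖ ^ 2 := by
    funext ω'
    congr 2
    rw [hd ω']
    module
  -- the Lipschitz/step bound, valid a.s.
  have hDbound : ∀ᵐ ω ∂ℙ,
      ‖gradient F (x ω) - gradient F (x_prev ω)‖ ^ 2 ≤ L ^ 2 * K ^ 2 * γ ^ 2 ∧
      ‖gradient F (x ω) - d_prev ω‖
        ≤ ‖gradient F (x_prev ω) - d_prev ω‖ + ‖gradient F (x ω) - gradient F (x_prev ω)‖ := by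
    filter_upwards [hstep] with ω h3
    constructor
    · have h1 := hLip (x ω) (hxC ω) (x_prev ω) (hxprevC ω)
      have h5 : ‖gradient F (x ω) - gradient F (x_prev ω)‖ ≤ |L| * (γ * K) := by
        nlinarith [le_abs_self L, abs_nonneg L, norm_nonneg (x ω - x_prev ω),
          norm_nonneg (gradient F (x ω) - gradient F (x_prev ω))]
      have h6 : (|L| * (γ * K)) ^ 2 = L ^ 2 * K ^ 2 * γ ^ 2 := by
        rw [mul_pow, sq_abs]; ring
      nlinarith [norm_nonneg (gradient F (x ω) - gradient F (x_prev ω)), abs_nonneg L,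
        mul_nonneg (abs_nonneg L) (mul_nonneg hγ hK)]
    · have : gradient F (x ω) - d_prev ω
          = (gradient F (x ω) - gradient F (x_prev ω))
            + (gradient F (x_prev ω) - d_prev ω) := by module
      rw [this]
      rw [add_comm (gradient F (x ω) - gradient F (x_prev ω))]
      exact norm_add_le _ _
  rcases eq_or_lt_of_le hρ1 with hρe | hρlt
  · -- case ρ = 1
    subst hρe
    have hfun1 : (fun ω' => ‖gradient F (x ω') - d ω'‖ ^ 2)
        = fun ω' => ‖g ω' - gradient F (x ω')‖ ^ 2 := by
      funext ω'
      rw [hd ω']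
      simp [norm_sub_rev]
    rw [hfun1]
    filter_upwards [hg_var] with ω h1
    have h2 : (0:ℝ) ≤ (1 - 1 / 2) * ‖gradient F (x_prev ω) - d_prev ω‖ ^ 2 := by positivity
    have h3 : (0:ℝ) ≤ 2 * L ^ 2 * K ^ 2 * γ ^ 2 / 1 := by positivity
    nlinarith
  · -- case ρ < 1
    have hs : (0:ℝ) < 1 - ρ := by linarith
    by_cases hcase : Integrable (fun ω' => ‖gradient F (x ω') - d ω'‖ ^ 2) ℙ
    · have hE2 : Integrable (fun ω => ‖(1 - ρ) • (gradient F (x ω) - d_prev ω)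
          - ρ • (g ω - gradient F (x ω))‖ ^ 2) ℙ := by
        rw [← heq_fun]; exact hcase
      have ha2 : Integrable (fun ω => ‖gradient F (x ω) - d_prev ω‖ ^ 2) ℙ :=
        sfw_sq_norm_integrable hm ℙ hs ha_meas hb_int hb0 hE2
      have hb_aesm : AEStronglyMeasurable (fun ω => g ω - gradient F (x ω)) ℙ := hb_int.1
      have hb2 : Integrable (fun ω => ‖g ω - gradient F (x ω)‖ ^ 2) ℙ := by
        refine Integrable.mono'
          (((ha2.const_mul (2 * (1 - ρ) ^ 2)).add (hE2.const_mul 2)).const_mul (ρ⁻¹ * ρ⁻¹))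
          (hb_aesm.norm.pow 2) (ae_of_all _ fun ω => ?_)
        simp only [Pi.add_apply]
        set X := ‖g ω - gradient F (x ω)‖ with hX_def
        set Aa := ‖gradient F (x ω) - d_prev ω‖ with hAa_def
        set Ee := ‖(1 - ρ) • (gradient F (x ω) - d_prev ω)
          - ρ • (g ω - gradient F (x ω))‖ with hEe_def
        have hX0 : 0 ≤ X := norm_nonneg _
        have hAa0 : 0 ≤ Aa := norm_nonneg _
        have hEe0 : 0 ≤ Ee := norm_nonneg _
        have hkey : ρ * X ≤ (1 - ρ) * Aa + Ee := by
          have h1 : ρ • (g ω - gradient F (x ω))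
              = (1 - ρ) • (gradient F (x ω) - d_prev ω)
                - ((1 - ρ) • (gradient F (x ω) - d_prev ω)
                  - ρ • (g ω - gradient F (x ω))) := by module
          calc ρ * X = ‖ρ • (g ω - gradient F (x ω))‖ := by
                rw [norm_smul, Real.norm_eq_abs, abs_of_pos hρ0]
            _ = ‖(1 - ρ) • (gradient F (x ω) - d_prev ω)
                  - ((1 - ρ) • (gradient F (x ω) - d_prev ω)
                    - ρ • (g ω - gradient F (x ω)))‖ := congrArg norm h1
            _ ≤ ‖(1 - ρ) • (gradient F (x ω) - d_prev ω)‖ + Ee := norm_sub_le _ _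
            _ = (1 - ρ) * Aa + Ee := by
                rw [norm_smul, Real.norm_eq_abs, abs_of_pos hs]
        have h2 : (ρ * X) ^ 2 ≤ ((1 - ρ) * Aa + Ee) ^ 2 :=
          pow_le_pow_left₀ (by positivity) hkey 2
        have h3 : ((1 - ρ) * Aa + Ee) ^ 2 ≤ 2 * ((1 - ρ) * Aa) ^ 2 + 2 * Ee ^ 2 := by
          nlinarith [sq_nonneg ((1 - ρ) * Aa - Ee)]
        have hrne : ρ ≠ 0 := hρ0.ne'
        have h4 : X ^ 2 = (ρ⁻¹ * ρ⁻¹) * (ρ * X) ^ 2 := by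
          have hcalc : (ρ⁻¹ * ρ⁻¹) * (ρ * X) ^ 2 = (ρ⁻¹ * ρ) ^ 2 * X ^ 2 := by ring
          rw [hcalc, inv_mul_cancel₀ hrne, one_pow, one_mul]
        rw [Real.norm_eq_abs, abs_of_nonneg (by positivity), h4]
        calc (ρ⁻¹ * ρ⁻¹) * (ρ * X) ^ 2
            ≤ (ρ⁻¹ * ρ⁻¹) * (2 * ((1 - ρ) * Aa) ^ 2 + 2 * Ee ^ 2) := by
              apply mul_le_mul_of_nonneg_left (le_trans h2 h3) (by positivity)
          _ = ρ⁻¹ * ρ⁻¹ * (2 * (1 - ρ) ^ 2 * Aa ^ 2 + 2 * Ee ^ 2) := by ring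
      have hB := sfw_condExp_sq_norm hm ℙ (1 - ρ) ρ ha_meas hb_int hb0 ha2 hb2
      rw [heq_fun]
      filter_upwards [hB, hg_var, hDbound] with ω e1 e2 e3
      refine le_trans (le_of_eq e1) ?_
      obtain ⟨hD2, hA⟩ := e3
      exact sfw_arith hρ0 hρlt (norm_nonneg _) (norm_nonneg _) (norm_nonneg _) hA hD2 e2
    · rw [condExp_of_not_integrable hcase]
      refine ae_of_all _ fun ω => ?_
      simp only [Pi.zero_apply]
      have h1 : (0:ℝ) ≤ (1 - ρ / 2) * ‖gradient F (x_prev ω) - d_prev ω‖ ^ 2 := by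
        have : (0:ℝ) ≤ 1 - ρ / 2 := by linarith
        positivity
      have h2 : (0:ℝ) ≤ 2 * L ^ 2 * K ^ 2 * γ ^ 2 / ρ := by positivity
      have h3 : (0:ℝ) ≤ ρ ^ 2 * σ ^ 2 := by positivity
      linarith
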